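/- Let A be a complex n×n matrix that is diagonalizable over ℂ and whose eigenvalues all have modulus 1. Then there exists a Hermitian positive-definite n×n matrix Y such that A* Y A = Y, where A* denotes the conjugate transpose. -/

import Mathlib

open Matrix
open scoped ComplexOrder

set_option maxHeartbeats 1000000 in
/-- If `A` is a complex square matrix which is diagonalizable over ℂ and all of whose
eigenvalues have modulus `1`, then there is a Hermitian positive-definite matrix `Y`
with `Aᴴ Y A = Y` (i.e. the scattering matrix `A` is lossless). -/
theorem diagonalizable_unit_eigenvalues_implies_lossless (n : ℕ)
    (A : Matrix (Fin n) (Fin n) ℂ)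
    (hdiag : ∃ (V : Matrix (Fin n) (Fin n) ℂ) (d : Fin n → ℂ),
      IsUnit V ∧ A = V⁻¹ * Matrix.diagonal d * V)
    (heig : ∀ μ : ℂ, A.charpoly.IsRoot μ → ‖μ‖ = 1) :
    ∃ Y : Matrix (Fin n) (Fin n) ℂ, Y.PosDef ∧ Aᴴ * Y * A = Y := by
  obtain ⟨V, d, hV, hA⟩ := hdiag
  have hVinv : V * V⁻¹ = 1 := mul_nonsing_inv V ((Matrix.isUnit_iff_isUnit_det V).mp hV)
  have hVinv' : V⁻¹ * V = 1 := nonsing_inv_mul V ((Matrix.isUnit_iff_isUnit_det V).mp hV)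
  -- each d i is a root of the charpoly of A
  have hroot : ∀ i, A.charpoly.IsRoot (d i) := by
    intro i
    have hev : ∀ μ : ℂ, A.charpoly.eval μ = ((Matrix.diagonal fun _ => μ) - A).det := by
      intro μ
      rw [Matrix.charpoly, ← Polynomial.coe_evalRingHom, RingHom.map_det]
      congr 1
      ext j k
      by_cases h : j = k <;>
        simp [Matrix.charmatrix, h, Matrix.diagonal_apply, Matrix.map_apply]
    have key : ((Matrix.diagonal fun _ => (d i)) - A).det = 0 := by
      have : (Matrix.diagonal fun _ => (d i)) - A
          = V⁻¹ * ((Matrix.diagonal fun _ => (d i)) - Matrix.diagonal d) * V := by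
        rw [hA]
        have h1 : (Matrix.diagonal fun _ : Fin n => (d i))
            = (d i) • (1 : Matrix (Fin n) (Fin n) ℂ) := by
          rw [Matrix.smul_one_eq_diagonal]
        rw [Matrix.mul_sub, Matrix.sub_mul, h1, Matrix.mul_smul, Matrix.mul_one,
          Matrix.smul_mul, hVinv', Matrix.mul_assoc]
      rw [this, Matrix.det_mul, Matrix.det_mul]
      have : ((Matrix.diagonal fun _ => (d i)) - Matrix.diagonal d).det = 0 := by
        rw [Matrix.diagonal_sub, Matrix.det_diagonal]
        exact Finset.prod_eq_zero (Finset.mem_univ i) (by simp)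
      rw [this]; ring
    simpa [Polynomial.IsRoot, hev] using key
  have habs : ∀ i, (starRingEnd ℂ) (d i) * d i = 1 := by
    intro i
    have := heig (d i) (hroot i)
    have h2 : Complex.normSq (d i) = 1 := by
      rw [← Complex.sq_norm, this]; norm_num
    rw [← Complex.normSq_eq_conj_mul_self, h2, Complex.ofReal_one]
  refine ⟨Vᴴ * V, ?_, ?_⟩
  · rw [Matrix.posDef_iff_dotProduct_mulVec]
    constructor
    · exact Matrix.isHermitian_conjTranspose_mul_self V
    · intro x hx
      have hVx : V *ᵥ x ≠ 0 := by
        intro h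
        apply hx
        have := congrArg (fun y => V⁻¹ *ᵥ y) h
        simpa [Matrix.mulVec_mulVec, hVinv'] using this
      rw [← Matrix.mulVec_mulVec, Matrix.dotProduct_mulVec, ← Matrix.star_mulVec]
      exact Matrix.dotProduct_star_self_pos_iff.mpr hVx
  · have hDD : (Matrix.diagonal d)ᴴ * (Matrix.diagonal d) = 1 := by
      rw [Matrix.diagonal_conjTranspose, Matrix.diagonal_mul_diagonal]
      simp only [Pi.star_apply, RCLike.star_def]
      rw [show (fun i => (starRingEnd ℂ) (d i) * d i) = fun _ => (1 : ℂ) from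
        funext fun i => habs i]
      exact Matrix.diagonal_one
    rw [hA]
    have hVH : Vᴴ⁻¹ * Vᴴ = 1 := Matrix.nonsing_inv_mul _ (by
      rw [Matrix.det_conjTranspose]
      exact ((Matrix.isUnit_iff_isUnit_det V).mp hV).star)
    simp only [Matrix.conjTranspose_mul, Matrix.conjTranspose_nonsing_inv, Matrix.mul_assoc]
    rw [show V * (V⁻¹ * (Matrix.diagonal d * V)) = Matrix.diagonal d * V by
      rw [← Matrix.mul_assoc, ← Matrix.mul_assoc, hVinv, Matrix.one_mul]]
    rw [show Vᴴ⁻¹ * (Vᴴ * (Matrix.diagonal d * V)) = Matrix.diagonal d * V by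
      rw [← Matrix.mul_assoc, ← Matrix.mul_assoc, hVH, Matrix.one_mul]]
    rw [show (Matrix.diagonal d)ᴴ * (Matrix.diagonal d * V) = V by
      rw [← Matrix.mul_assoc, hDD, Matrix.one_mul]]
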